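/- Let d ≥ 1, 1 ≤ k ≤ n, and let φ be a pure state (rank-one projection onto a unit vector) on ℂ^d. Then D(φ^{⊗n}‖π_sym^{d,n}) − D(P_{n→k}(φ^{⊗n})‖P_{n→k}(π_sym^{d,n})) = −log(d[k]/d[n]) = log(d[n]/d[k]). -/

import Mathlib

open scoped BigOperators Matrix Kronecker ComplexOrder
open Matrix

noncomputable section

variable {ι : Type*} [Fintype ι] [DecidableEq ι]

/-- Apply a real-scalar function to a Hermitian matrix via the spectral decomposition
(junk value `0` on non-Hermitian matrices). -/
def hermFun (f : ℝ → ℂ) (A : Matrix ι ι ℂ) : Matrix ι ι ℂ :=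
  if hA : A.IsHermitian then
    (hA.eigenvectorUnitary : Matrix ι ι ℂ) * Matrix.diagonal (fun i => f (hA.eigenvalues i)) *
      (star (hA.eigenvectorUnitary : Matrix ι ι ℂ))
  else 0

/-- Matrix logarithm (on the support; natural logarithm). -/
def matLog (A : Matrix ι ι ℂ) : Matrix ι ι ℂ := hermFun (fun x => (Real.log x : ℂ)) A

/-- Matrix square root of a Hermitian (e.g. positive semidefinite) matrix. -/
def matSqrt (A : Matrix ι ι ℂ) : Matrix ι ι ℂ := hermFun (fun x => (Real.sqrt x : ℂ)) A

/-- Complex matrix power with the Moore–Penrose convention (inverse powers taken on the support). -/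
def matCPow (A : Matrix ι ι ℂ) (z : ℂ) : Matrix ι ι ℂ :=
  hermFun (fun x => if x = 0 then 0 else (x : ℂ) ^ z) A

/-- A state (density operator). -/
def IsState (ρ : Matrix ι ι ℂ) : Prop := ρ.PosSemidef ∧ ρ.trace = 1

/-- Quantum relative entropy `D(ρ‖σ) = tr[ρ (log ρ - log σ)]`. -/
def relEnt (ρ σ : Matrix ι ι ℂ) : ℝ := ((ρ * (matLog ρ - matLog σ)).trace).re

/-- von Neumann entropy `H(ρ) = -tr[ρ log ρ]`. -/
def vnEntropy (ρ : Matrix ι ι ℂ) : ℝ := -((ρ * matLog ρ).trace).re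

/-- Trace norm `‖X‖₁ = tr √(X† X)`. -/
def traceNorm (X : Matrix ι ι ℂ) : ℝ := ((matSqrt (Xᴴ * X)).trace).re

/-- Fidelity `F(ρ,σ) = ‖√ρ √σ‖₁²`. -/
def fidelity (ρ σ : Matrix ι ι ℂ) : ℝ := (traceNorm (matSqrt ρ * matSqrt σ)) ^ 2

variable {A B : Type*} [Fintype A] [DecidableEq A] [Fintype B] [DecidableEq B]

/-- The extension `Λ ⊗ id_m` of a map on matrices. -/
def extendChan (Λ : Matrix A A ℂ →ₗ[ℂ] Matrix B B ℂ) {m : Type*} [Fintype m]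
    (M : Matrix (A × m) (A × m) ℂ) : Matrix (B × m) (B × m) ℂ :=
  fun p q => Λ (fun a a' => M (a, p.2) (a', q.2)) p.1 q.1

/-- A quantum channel: a completely positive trace-preserving linear map. -/
structure IsQChannel (Λ : Matrix A A ℂ →ₗ[ℂ] Matrix B B ℂ) : Prop where
  tp : ∀ M, (Λ M).trace = M.trace
  cp : ∀ (m : ℕ) (M : Matrix (A × Fin m) (A × Fin m) ℂ), M.PosSemidef →
    (extendChan Λ M).PosSemidef

/-- The marginal of a state of `n` systems on the `j`-th system. -/
def marginal {n : ℕ} (ρ : Matrix (Fin n → ι) (Fin n → ι) ℂ) (j : Fin n) :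
    Matrix ι ι ℂ :=
  fun a b => ∑ f : {i : Fin n // i ≠ j} → ι,
      ρ (fun i => if h : i = j then a else f ⟨i, h⟩)
        (fun i => if h : i = j then b else f ⟨i, h⟩)

/-- `n`-fold tensor power of a matrix. -/
def tpow (σ : Matrix ι ι ℂ) (n : ℕ) : Matrix (Fin n → ι) (Fin n → ι) ℂ :=
  fun f g => ∏ i, σ (f i) (g i)

/-- Partial trace over the last `n - k` tensor factors. -/
def ptraceLast {n k : ℕ} (h : k ≤ n) (ρ : Matrix (Fin n → ι) (Fin n → ι) ℂ) :
    Matrix (Fin k → ι) (Fin k → ι) ℂ :=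
  fun a b => ∑ z : Fin (n - k) → ι,
    ρ (fun i => if h' : (i : ℕ) < k then a ⟨i, h'⟩ else z ⟨(i : ℕ) - k, by have := i.isLt; omega⟩)
      (fun i => if h' : (i : ℕ) < k then b ⟨i, h'⟩ else z ⟨(i : ℕ) - k, by have := i.isLt; omega⟩)

/-- Permutation matrix acting on `(ℂ^d)^{⊗ n}`. -/
def permMat (d n : ℕ) (π : Equiv.Perm (Fin n)) :
    Matrix (Fin n → Fin d) (Fin n → Fin d) ℂ :=
  fun f g => if g = f ∘ π then 1 else 0

/-- Orthogonal projection onto the symmetric subspace of `(ℂ^d)^{⊗ n}`. -/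
def symProj (d n : ℕ) : Matrix (Fin n → Fin d) (Fin n → Fin d) ℂ :=
  ((n.factorial : ℂ))⁻¹ • ∑ π : Equiv.Perm (Fin n), permMat d n π

/-- Dimension `d[n] = C(d+n-1, n)` of the symmetric subspace. -/
def dsym (d n : ℕ) : ℕ := (d + n - 1).choose n

/-- Maximally mixed state on the symmetric subspace. -/
def piSym (d n : ℕ) : Matrix (Fin n → Fin d) (Fin n → Fin d) ℂ :=
  ((dsym d n : ℂ))⁻¹ • symProj d n

/-- Tensoring a matrix on the first `k` factors with the identity on the last `n-k` factors. -/
def extendId {d k n : ℕ} (h : k ≤ n) (M : Matrix (Fin k → Fin d) (Fin k → Fin d) ℂ) :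
    Matrix (Fin n → Fin d) (Fin n → Fin d) ℂ :=
  fun f g => (if ∀ i : Fin n, k ≤ (i : ℕ) → f i = g i then 1 else 0) *
    M (fun i => f (Fin.castLE h i)) (fun i => g (Fin.castLE h i))

/-- The universal quantum cloning machine `C_{k→n}`. -/
def uqcm (d : ℕ) {k n : ℕ} (h : k ≤ n) (ω : Matrix (Fin k → Fin d) (Fin k → Fin d) ℂ) :
    Matrix (Fin n → Fin d) (Fin n → Fin d) ℂ :=
  (((dsym d k : ℂ)) / ((dsym d n : ℂ))) •
    (symProj d n * extendId h (symProj d k * ω * symProj d k) * symProj d n)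

/-- The symmetrized partial trace channel `P_{n→k}`. -/
def symPTrace (d : ℕ) {k n : ℕ} (h : k ≤ n) (ω : Matrix (Fin n → Fin d) (Fin n → Fin d) ℂ) :
    Matrix (Fin k → Fin d) (Fin k → Fin d) ℂ :=
  symProj d k * ptraceLast h (symProj d n * ω * symProj d n) * symProj d k

/-- Orthogonal projection onto the antisymmetric subspace of `(ℂ^d)^{⊗ n}`. -/
def antiProj (d n : ℕ) : Matrix (Fin n → Fin d) (Fin n → Fin d) ℂ :=
  ((n.factorial : ℂ))⁻¹ • ∑ π : Equiv.Perm (Fin n), ((Equiv.Perm.sign π : ℤ) : ℂ) • permMat d n π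

/-- Maximally mixed state on the antisymmetric subspace. -/
def piAnti (d n : ℕ) : Matrix (Fin n → Fin d) (Fin n → Fin d) ℂ :=
  ((d.choose n : ℂ))⁻¹ • antiProj d n

/-- The antisymmetric cloning machine. -/
def antiClone (d : ℕ) {k n : ℕ} (h : k ≤ n) (ω : Matrix (Fin k → Fin d) (Fin k → Fin d) ℂ) :
    Matrix (Fin n → Fin d) (Fin n → Fin d) ℂ :=
  (((d.choose k : ℂ)) / ((d.choose n : ℂ))) •
    (antiProj d n * extendId h (antiProj d k * ω * antiProj d k) * antiProj d n)

/-- The antisymmetrized partial trace. -/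
def antiPTrace (d : ℕ) {k n : ℕ} (h : k ≤ n) (ω : Matrix (Fin n → Fin d) (Fin n → Fin d) ℂ) :
    Matrix (Fin k → Fin d) (Fin k → Fin d) ℂ :=
  antiProj d k * ptraceLast h (antiProj d n * ω * antiProj d n) * antiProj d k

/-- Rank-one projection (outer product) `|v⟩⟨v|`. -/
def outer {α : Type*} (v : α → ℂ) : Matrix α α ℂ :=
  fun x y => v x * (starRingEnd ℂ) (v y)

/-- Slater determinant vector `φ₁ ∧ ⋯ ∧ φ_k`. -/
def slater {d k : ℕ} (w : Fin k → (Fin d → ℂ)) : (Fin k → Fin d) → ℂ :=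
  fun f => ((Real.sqrt k.factorial : ℂ))⁻¹ *
    ∑ π : Equiv.Perm (Fin k), ((Equiv.Perm.sign π : ℤ) : ℂ) * ∏ i, w (π i) (f i)

/-- Partial trace over the second tensor factor. -/
def trB {ιA ιB : Type*} [Fintype ιB] (ρ : Matrix (ιA × ιB) (ιA × ιB) ℂ) : Matrix ιA ιA ℂ :=
  fun a a' => ∑ b, ρ (a, b) (a', b)

/-- Partial trace over the first tensor factor. -/
def trA {ιA ιB : Type*} [Fintype ιA] (ρ : Matrix (ιA × ιB) (ιA × ιB) ℂ) : Matrix ιB ιB ℂ :=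
  fun b b' => ∑ a, ρ (a, b) (a, b')

/-- The probability density `β(t) = (π/2)(1 + cosh(π t))⁻¹`. -/
def betaDens (t : ℝ) : ℝ := (Real.pi / 2) * (1 + Real.cosh (Real.pi * t))⁻¹

/-- Rotated Petz recovery map `R^t_{A,X}`, mapping operators on `B` to operators on `A ⊗ B`. -/
def petzA {ιA ιB : Type*} [Fintype ιA] [DecidableEq ιA] [Fintype ιB] [DecidableEq ιB]
    (t : ℝ) (X : Matrix (ιA × ιB) (ιA × ιB) ℂ) (Y : Matrix ιB ιB ℂ) :
    Matrix (ιA × ιB) (ιA × ιB) ℂ :=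
  matCPow X ((1 + t * Complex.I) / 2) *
    ((1 : Matrix ιA ιA ℂ) ⊗ₖ
      (matCPow (trA X) (-(1 + t * Complex.I) / 2) * Y * matCPow (trA X) (-(1 - t * Complex.I) / 2))) *
    matCPow X ((1 - t * Complex.I) / 2)

/-- Rotated Petz recovery map `R^t_{B,X}`, mapping operators on `A` to operators on `A ⊗ B`. -/
def petzB {ιA ιB : Type*} [Fintype ιA] [DecidableEq ιA] [Fintype ιB] [DecidableEq ιB]
    (t : ℝ) (X : Matrix (ιA × ιB) (ιA × ιB) ℂ) (Y : Matrix ιA ιA ℂ) :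
    Matrix (ιA × ιB) (ιA × ιB) ℂ :=
  matCPow X ((1 + t * Complex.I) / 2) *
    ((matCPow (trB X) (-(1 + t * Complex.I) / 2) * Y * matCPow (trB X) (-(1 - t * Complex.I) / 2)) ⊗ₖ
      (1 : Matrix ιB ιB ℂ)) *
    matCPow X ((1 - t * Complex.I) / 2)

/-- Cloning map between two general subspaces, given by their orthogonal projections. -/
def genClone {d k n : ℕ} (h : k ≤ n) (dX dY : ℕ)
    (PX : Matrix (Fin n → Fin d) (Fin n → Fin d) ℂ)
    (PY : Matrix (Fin k → Fin d) (Fin k → Fin d) ℂ)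
    (ω : Matrix (Fin k → Fin d) (Fin k → Fin d) ℂ) :
    Matrix (Fin n → Fin d) (Fin n → Fin d) ℂ :=
  (((dY : ℂ)) / ((dX : ℂ))) • (PX * extendId h (PY * ω * PY) * PX)

/-- Partial trace channel between two general subspaces. -/
def genPTrace {d k n : ℕ} (h : k ≤ n)
    (PX : Matrix (Fin n → Fin d) (Fin n → Fin d) ℂ)
    (PY : Matrix (Fin k → Fin d) (Fin k → Fin d) ℂ)
    (ω : Matrix (Fin n → Fin d) (Fin n → Fin d) ℂ) :
    Matrix (Fin k → Fin d) (Fin k → Fin d) ℂ :=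
  PY * ptraceLast h (PX * ω * PX) * PY

end
section AuxLemmas

open Finset

/-! ### Counting helpers -/

private def cnt {m d : ℕ} (f : Fin m → Fin d) (c : Fin d) : ℕ :=
  ∑ i, if f i = c then 1 else 0

private lemma cnt_sum {m d : ℕ} (f : Fin m → Fin d) : ∑ c, cnt f c = m := by
  simp only [cnt]
  rw [Finset.sum_comm]
  simp

private lemma card_fiber {m d : ℕ} (f : Fin m → Fin d) (c : Fin d) :
    Fintype.card {i // f i = c} = cnt f c := by
  rw [Fintype.card_subtype, cnt, Finset.card_filter]

/-- The set of permutations carrying `f` to `g` is in bijection with fiberwise bijections. -/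
private def permFiberEquiv {m d : ℕ} (f g : Fin m → Fin d) :
    {π : Equiv.Perm (Fin m) // f ∘ π = g} ≃ (∀ c, {i // g i = c} ≃ {i // f i = c}) where
  toFun := fun ⟨π, hπ⟩ c =>
    { toFun := fun i => ⟨π i.1, (congrFun hπ i.1).trans i.2⟩
      invFun := fun j => ⟨π.symm j.1, by
        have h1 : f (π (π.symm j.1)) = g (π.symm j.1) := congrFun hπ _
        rw [Equiv.apply_symm_apply] at h1
        exact h1.symm.trans j.2⟩
      left_inv := fun i => Subtype.ext (π.symm_apply_apply i.1)
      right_inv := fun j => Subtype.ext (π.apply_symm_apply j.1) }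
  invFun := fun e => ⟨Equiv.ofFiberEquiv e, funext fun i => Equiv.ofFiberEquiv_map e i⟩
  left_inv := by
    rintro ⟨π, hπ⟩
    apply Subtype.ext
    apply Equiv.ext
    intro i
    rfl
  right_inv := by
    intro e
    funext c
    apply Equiv.ext
    rintro ⟨i, hi⟩
    apply Subtype.ext
    subst hi
    rfl

private lemma card_perm_comp {m d : ℕ} (f g : Fin m → Fin d) :
    Fintype.card {π : Equiv.Perm (Fin m) // f ∘ π = g} =
      if ∀ c, cnt g c = cnt f c then ∏ c, (cnt f c).factorial else 0 := by
  rw [Fintype.card_congr (permFiberEquiv f g), Fintype.card_pi]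
  by_cases h : ∀ c, cnt g c = cnt f c
  · rw [if_pos h]
    refine Finset.prod_congr rfl fun c _ => ?_
    have hcard : Fintype.card {i // g i = c} = Fintype.card {i // f i = c} := by
      rw [card_fiber, card_fiber, h c]
    rw [Fintype.card_equiv (Fintype.equivOfCardEq hcard), card_fiber, h c]
  · rw [if_neg h]
    push_neg at h
    obtain ⟨c₀, hc₀⟩ := h
    refine Finset.prod_eq_zero (Finset.mem_univ c₀) ?_
    rw [Fintype.card_eq_zero_iff]
    refine ⟨fun e => hc₀ ?_⟩
    rw [← card_fiber, ← card_fiber, Fintype.card_congr e]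

/-- Ascending product `d(d+1)⋯(d+t-1)`. -/
private def af (d t : ℕ) : ℕ := ∏ j ∈ Finset.range t, (d + j)

private lemma af_succ (d t : ℕ) : af d (t + 1) = af d t * (d + t) := Finset.prod_range_succ _ _

private lemma af_eq {d : ℕ} (hd : 1 ≤ d) (m : ℕ) : af d m = dsym d m * m.factorial := by
  induction m with
  | zero => simp [af, dsym]
  | succ m ih =>
      have h1 : d + m - 1 + 1 = d + m := by omega
      have h2 : (d + m) * (d + m - 1).choose m = (d + m).choose (m + 1) * (m + 1) := by
        have := Nat.add_one_mul_choose_eq (d + m - 1) m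
        rw [h1] at this
        exact this
      rw [af_succ, ih, dsym, dsym, Nat.factorial_succ]
      rw [show d + (m + 1) - 1 = d + m by omega]
      calc (d + m - 1).choose m * m.factorial * (d + m)
          = ((d + m) * (d + m - 1).choose m) * m.factorial := by ring
        _ = ((d + m).choose (m + 1) * (m + 1)) * m.factorial := by rw [h2]
        _ = (d + m).choose (m + 1) * ((m + 1) * m.factorial) := by ring

private lemma dsym_pos {d : ℕ} (hd : 1 ≤ d) (m : ℕ) : 0 < dsym d m :=
  Nat.choose_pos (by omega)

private lemma cnt_cons {m d : ℕ} (x : Fin d) (z : Fin m → Fin d) (c : Fin d) :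
    cnt (Fin.cons x z) c = (if x = c then 1 else 0) + cnt z c := by
  rw [cnt, Fin.sum_univ_succ]
  simp [cnt]

/-- Key combinatorial identity. -/
private lemma key_count {d : ℕ} (hd : 1 ≤ d) (m : ℕ) :
    ∀ μ : Fin d → ℕ,
      (∑ z : Fin m → Fin d, ∏ c, (μ c + cnt z c).factorial) * af d (∑ c, μ c) =
        af d ((∑ c, μ c) + m) * ∏ c, (μ c).factorial := by
  induction m with
  | zero =>
      intro μ
      have hz : ∀ (z : Fin 0 → Fin d) (c : Fin d), cnt z c = 0 := by
        intro z c; simp [cnt]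
      rw [Fintype.sum_eq_single (fun i => i.elim0) ?_]
      · simp [hz]; ring
      · intro z hz'; exact absurd (funext fun i => i.elim0) hz'
  | succ m ih =>
      intro μ
      set K := ∑ c, μ c with hK
      have hpos : 0 < d + K := by omega
      apply Nat.eq_of_mul_eq_mul_right hpos
      have hsum1 : ∀ x : Fin d, (∑ c, (μ c + if x = c then 1 else 0)) = K + 1 := by
        intro x
        rw [Finset.sum_add_distrib]
        simp [hK]
      have hprodμ' : ∀ x : Fin d,
          (∏ c, (μ c + if x = c then 1 else 0).factorial) =
            (μ x + 1) * ∏ c, (μ c).factorial := by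
        intro x
        have h1 : (∏ c, (μ c + if x = c then 1 else 0).factorial)
            = (μ x + 1).factorial * ∏ c ∈ Finset.univ.erase x, (μ c).factorial := by
          rw [← Finset.mul_prod_erase _ _ (Finset.mem_univ x)]
          congr 1
          · congr 2; simp
          · exact Finset.prod_congr rfl fun c hc => by
              rw [if_neg (Ne.symm (Finset.mem_erase.mp hc).1), Nat.add_zero]
        have h2 : (μ x).factorial * ∏ c ∈ Finset.univ.erase x, (μ c).factorial
            = ∏ c, (μ c).factorial :=
          Finset.mul_prod_erase Finset.univ (fun c => (μ c).factorial) (Finset.mem_univ x)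
        rw [h1, Nat.factorial_succ, mul_assoc, h2]
      have hx : ∀ x : Fin d,
          (∑ z : Fin m → Fin d, ∏ c, ((μ c + if x = c then 1 else 0) + cnt z c).factorial)
            * af d (K + 1) = af d ((K + 1) + m) * ((μ x + 1) * ∏ c, (μ c).factorial) := by
        intro x
        have h := ih (fun c => μ c + if x = c then 1 else 0)
        rw [hsum1 x, hprodμ' x] at h
        exact h
      have hre : (∑ z : Fin (m + 1) → Fin d, ∏ c, (μ c + cnt z c).factorial)
          = ∑ x : Fin d, ∑ z : Fin m → Fin d,
              ∏ c, ((μ c + if x = c then 1 else 0) + cnt z c).factorial := by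
        rw [← (Fin.consEquiv (fun _ : Fin (m+1) => Fin d)).sum_comp
          (fun z => ∏ c, (μ c + cnt z c).factorial), Fintype.sum_prod_type]
        refine Finset.sum_congr rfl fun x _ => Finset.sum_congr rfl fun z _ => ?_
        refine Finset.prod_congr rfl fun c _ => ?_
        have hc : Fin.consEquiv (fun _ : Fin (m+1) => Fin d) (x, z) = Fin.cons x z := rfl
        rw [hc, cnt_cons]
        exact congrArg Nat.factorial (Nat.add_assoc _ _ _).symm
      calc (∑ z : Fin (m + 1) → Fin d, ∏ c, (μ c + cnt z c).factorial) * af d K * (d + K)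
          = (∑ x : Fin d, ∑ z : Fin m → Fin d,
              ∏ c, ((μ c + if x = c then 1 else 0) + cnt z c).factorial) * af d (K + 1) := by
            rw [hre, af_succ]; ring
        _ = ∑ x : Fin d, (∑ z : Fin m → Fin d,
              ∏ c, ((μ c + if x = c then 1 else 0) + cnt z c).factorial) * af d (K + 1) :=
            Finset.sum_mul _ _ _
        _ = ∑ x : Fin d, af d ((K + 1) + m) * ((μ x + 1) * ∏ c, (μ c).factorial) :=
            Finset.sum_congr rfl fun x _ => hx x
        _ = af d ((K + 1) + m) * ((∑ x : Fin d, (μ x + 1)) * ∏ c, (μ c).factorial) := by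
            rw [← Finset.mul_sum]
            congr 1
            rw [Finset.sum_mul]
        _ = (af d (K + (m + 1)) * ∏ c, (μ c).factorial) * (d + K) := by
            rw [Finset.sum_add_distrib]
            simp only [Finset.sum_const, Finset.card_univ, Fintype.card_fin, smul_eq_mul,
              mul_one, ← hK]
            rw [show (K + 1) + m = K + (m + 1) by omega]
            ring

end AuxLemmas
section MatrixAux

open Finset Matrix

/-! ### permutation matrices and the symmetric projector -/

private lemma permMat_mul_permMat {d m : ℕ} (π σ : Equiv.Perm (Fin m)) :
    permMat d m π * permMat d m σ = permMat d m (π * σ) := by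
  ext f g
  rw [Matrix.mul_apply]
  simp only [permMat, ite_mul, one_mul, zero_mul]
  rw [Finset.sum_ite_eq' Finset.univ (f ∘ ⇑π) (fun h => if g = h ∘ ⇑σ then (1:ℂ) else 0)]
  simp only [Finset.mem_univ, if_true]
  rfl

private lemma permMat_mul_symProj {d m : ℕ} (π : Equiv.Perm (Fin m)) :
    permMat d m π * symProj d m = symProj d m := by
  rw [symProj, Matrix.mul_smul, Finset.mul_sum]
  congr 1
  rw [Finset.sum_congr rfl fun σ _ => permMat_mul_permMat π σ]
  exact Fintype.sum_equiv (Equiv.mulLeft π) _ _ (fun σ => rfl)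

private lemma symProj_idem {d m : ℕ} : symProj d m * symProj d m = symProj d m := by
  calc symProj d m * symProj d m
      = ((m.factorial : ℂ))⁻¹ • ∑ π : Equiv.Perm (Fin m), (permMat d m π * symProj d m) := by
        rw [symProj, Matrix.smul_mul, Finset.sum_mul]
    _ = ((m.factorial : ℂ))⁻¹ • ∑ _π : Equiv.Perm (Fin m), symProj d m := by
        rw [Finset.sum_congr rfl fun π _ => permMat_mul_symProj π]
    _ = symProj d m := by
        rw [Finset.sum_const, Finset.card_univ, Fintype.card_perm, Fintype.card_fin,
          ← Nat.cast_smul_eq_nsmul ℂ, smul_smul,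
          inv_mul_cancel₀ (Nat.cast_ne_zero.mpr m.factorial_ne_zero), one_smul]

private lemma comp_perm_iff {d m : ℕ} (π : Equiv.Perm (Fin m)) (f g : Fin m → Fin d) :
    f = g ∘ ⇑π ↔ g = f ∘ ⇑π⁻¹ := by
  constructor
  · intro h; funext i
    have := congrFun h (π⁻¹ i)
    simpa using this.symm
  · intro h; funext i
    have := congrFun h (π i)
    simpa using this.symm

private lemma permMat_conjTranspose {d m : ℕ} (π : Equiv.Perm (Fin m)) :
    (permMat d m π)ᴴ = permMat d m π⁻¹ := by
  ext f g
  rw [Matrix.conjTranspose_apply, permMat, permMat]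
  rw [if_congr (comp_perm_iff π f g) rfl rfl]
  simp [apply_ite (starRingEnd ℂ)]

private lemma symProj_herm {d m : ℕ} : (symProj d m).IsHermitian := by
  show (symProj d m)ᴴ = symProj d m
  rw [symProj, Matrix.conjTranspose_smul, Matrix.conjTranspose_sum]
  rw [Finset.sum_congr rfl fun π _ => permMat_conjTranspose π]
  have h1 : (∑ π : Equiv.Perm (Fin m), permMat d m π⁻¹) = ∑ π : Equiv.Perm (Fin m), permMat d m π :=
    Fintype.sum_equiv (Equiv.inv (Equiv.Perm (Fin m))) _ _ (fun σ => rfl)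
  rw [h1]
  congr 1
  simp

/-! ### tensor powers of pure states -/

private lemma tpow_outer_apply {d m : ℕ} (u : Fin d → ℂ) (f g : Fin m → Fin d) :
    tpow (outer u) m f g = (∏ i, u (f i)) * ∏ i, (starRingEnd ℂ) (u (g i)) := by
  simp [tpow, outer, Finset.prod_mul_distrib]

private lemma permMat_mul_tpow {d m : ℕ} (u : Fin d → ℂ) (π : Equiv.Perm (Fin m)) :
    permMat d m π * tpow (outer u) m = tpow (outer u) m := by
  ext f g
  rw [Matrix.mul_apply]
  simp only [permMat, ite_mul, one_mul, zero_mul]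
  rw [Finset.sum_ite_eq' Finset.univ (f ∘ ⇑π) (fun h => tpow (outer u) m h g)]
  simp only [Finset.mem_univ, if_true]
  rw [tpow_outer_apply, tpow_outer_apply]
  congr 1
  exact Equiv.prod_comp π (fun i => u (f i))

private lemma symProj_mul_tpow {d m : ℕ} (u : Fin d → ℂ) :
    symProj d m * tpow (outer u) m = tpow (outer u) m := by
  calc symProj d m * tpow (outer u) m
      = ((m.factorial : ℂ))⁻¹ • ∑ π : Equiv.Perm (Fin m), (permMat d m π * tpow (outer u) m) := by
        rw [symProj, Matrix.smul_mul, Finset.sum_mul]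
    _ = ((m.factorial : ℂ))⁻¹ • ∑ _π : Equiv.Perm (Fin m), tpow (outer u) m := by
        rw [Finset.sum_congr rfl fun π _ => permMat_mul_tpow u π]
    _ = tpow (outer u) m := by
        rw [Finset.sum_const, Finset.card_univ, Fintype.card_perm, Fintype.card_fin,
          ← Nat.cast_smul_eq_nsmul ℂ, smul_smul,
          inv_mul_cancel₀ (Nat.cast_ne_zero.mpr m.factorial_ne_zero), one_smul]

private lemma tpow_herm {d m : ℕ} (u : Fin d → ℂ) : (tpow (outer u) m).IsHermitian := by
  show (tpow (outer u) m)ᴴ = tpow (outer u) m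
  ext f g
  rw [Matrix.conjTranspose_apply, tpow_outer_apply, tpow_outer_apply]
  simp only [star_mul', star_prod, Complex.star_def, Complex.conj_conj]
  ring

private lemma tpow_mul_symProj {d m : ℕ} (u : Fin d → ℂ) :
    tpow (outer u) m * symProj d m = tpow (outer u) m := by
  have h := congrArg Matrix.conjTranspose (symProj_mul_tpow (d := d) (m := m) u)
  rw [Matrix.conjTranspose_mul, tpow_herm u, symProj_herm] at h
  exact h

private lemma sum_fun_prod {d : ℕ} (w : Fin d → ℂ) (hw : ∑ x, w x = 1) (m : ℕ) :
    ∑ h : Fin m → Fin d, ∏ i, w (h i) = 1 := by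
  have h1 := Finset.sum_pow' Finset.univ w m
  rw [hw, one_pow, Fintype.piFinset_univ] at h1
  exact h1.symm

private lemma sum_conj_mul {d : ℕ} (u : Fin d → ℂ) (hu : ∑ a, Complex.normSq (u a) = 1) :
    ∑ x, (starRingEnd ℂ) (u x) * u x = 1 := by
  have h1 : ∀ x : Fin d, (starRingEnd ℂ) (u x) * u x = (Complex.normSq (u x) : ℂ) := fun x => by
    rw [mul_comm, Complex.mul_conj]
  rw [Finset.sum_congr rfl fun x _ => h1 x, ← Complex.ofReal_sum, hu, Complex.ofReal_one]

private lemma sum_mul_conj {d : ℕ} (u : Fin d → ℂ) (hu : ∑ a, Complex.normSq (u a) = 1) :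
    ∑ x, u x * (starRingEnd ℂ) (u x) = 1 := by
  rw [Finset.sum_congr rfl fun x _ => mul_comm (u x) _]
  exact sum_conj_mul u hu

private lemma tpow_idem {d m : ℕ} (u : Fin d → ℂ) (hu : ∑ a, Complex.normSq (u a) = 1) :
    tpow (outer u) m * tpow (outer u) m = tpow (outer u) m := by
  ext f g
  rw [Matrix.mul_apply]
  have h1 : ∀ h : Fin m → Fin d, tpow (outer u) m f h * tpow (outer u) m h g
      = tpow (outer u) m f g * ∏ i, ((starRingEnd ℂ) (u (h i)) * u (h i)) := by
    intro h
    rw [tpow_outer_apply, tpow_outer_apply, tpow_outer_apply, Finset.prod_mul_distrib]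
    ring
  rw [Finset.sum_congr rfl fun h _ => h1 h, ← Finset.mul_sum,
    sum_fun_prod _ (sum_conj_mul u hu) m, mul_one]

private lemma tpow_trace {d m : ℕ} (u : Fin d → ℂ) (hu : ∑ a, Complex.normSq (u a) = 1) :
    (tpow (outer u) m).trace = 1 := by
  rw [Matrix.trace]
  have h1 : ∀ f : Fin m → Fin d, (tpow (outer u) m).diag f
      = ∏ i, (u (f i) * (starRingEnd ℂ) (u (f i))) := by
    intro f
    simp [Matrix.diag, tpow, outer]
  rw [Finset.sum_congr rfl fun f _ => h1 f]
  exact sum_fun_prod _ (sum_mul_conj u hu) m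

end MatrixAux
section PTraceAux

open Finset Matrix

variable {d k n : ℕ}

private def extf (hkn : k ≤ n) (a : Fin k → Fin d) (z : Fin (n - k) → Fin d) : Fin n → Fin d :=
  fun i => if h' : (i : ℕ) < k then a ⟨i, h'⟩ else z ⟨(i : ℕ) - k, by have := i.isLt; omega⟩

private lemma ptraceLast_apply (hkn : k ≤ n) (M : Matrix (Fin n → Fin d) (Fin n → Fin d) ℂ)
    (a b : Fin k → Fin d) :
    ptraceLast hkn M a b = ∑ z, M (extf hkn a z) (extf hkn b z) := rfl

private def esum (hkn : k ≤ n) : Fin k ⊕ Fin (n - k) ≃ Fin n :=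
  finSumFinEquiv.trans (finCongr (by omega))

private lemma extf_inl (hkn : k ≤ n) (a : Fin k → Fin d) (z : Fin (n - k) → Fin d) (j : Fin k) :
    extf hkn a z (esum hkn (Sum.inl j)) = a j := by
  have hv : ((esum hkn (Sum.inl j) : Fin n) : ℕ) = (j : ℕ) := by simp [esum]
  simp only [extf, hv]
  rw [dif_pos j.isLt]

private lemma extf_inr (hkn : k ≤ n) (a : Fin k → Fin d) (z : Fin (n - k) → Fin d)
    (j : Fin (n - k)) : extf hkn a z (esum hkn (Sum.inr j)) = z j := by
  have hv : ((esum hkn (Sum.inr j) : Fin n) : ℕ) = k + (j : ℕ) := by simp [esum]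
  simp only [extf, hv]
  rw [dif_neg (by omega)]
  congr 1
  apply Fin.ext
  simp

private lemma cnt_extf (hkn : k ≤ n) (a : Fin k → Fin d) (z : Fin (n - k) → Fin d) (c : Fin d) :
    cnt (extf hkn a z) c = cnt a c + cnt z c := by
  rw [cnt, ← (esum hkn).sum_comp (fun i => if extf hkn a z i = c then 1 else 0),
    Fintype.sum_sum_type]
  congr 1
  · exact Finset.sum_congr rfl fun j _ => by rw [extf_inl]
  · exact Finset.sum_congr rfl fun j _ => by rw [extf_inr]

private lemma ptraceLast_smul (hkn : k ≤ n) (c : ℂ)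
    (M : Matrix (Fin n → Fin d) (Fin n → Fin d) ℂ) :
    ptraceLast hkn (c • M) = c • ptraceLast hkn M := by
  ext a b
  simp [ptraceLast, Matrix.smul_apply, Finset.mul_sum]

private lemma ptraceLast_tpow (hkn : k ≤ n) (u : Fin d → ℂ)
    (hu : ∑ a, Complex.normSq (u a) = 1) :
    ptraceLast hkn (tpow (outer u) n) = tpow (outer u) k := by
  ext a b
  rw [ptraceLast_apply]
  have hterm : ∀ z : Fin (n - k) → Fin d, tpow (outer u) n (extf hkn a z) (extf hkn b z)
      = tpow (outer u) k a b * ∏ j, (u (z j) * (starRingEnd ℂ) (u (z j))) := by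
    intro z
    have h0 : tpow (outer u) n (extf hkn a z) (extf hkn b z)
        = ∏ i, (u (extf hkn a z i) * (starRingEnd ℂ) (u (extf hkn b z i))) := by
      simp [tpow, outer]
    rw [h0, ← (esum hkn).prod_comp
      (fun i => u (extf hkn a z i) * (starRingEnd ℂ) (u (extf hkn b z i))),
      Fintype.prod_sum_type]
    congr 1
    · rw [Finset.prod_congr rfl fun j _ => by rw [extf_inl, extf_inl]]
      simp [tpow, outer]
    · exact Finset.prod_congr rfl fun j _ => by rw [extf_inr, extf_inr]
  rw [Finset.sum_congr rfl fun z _ => hterm z, ← Finset.mul_sum,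
    sum_fun_prod _ (sum_mul_conj u hu) (n - k), mul_one]

private lemma symProj_apply (m : ℕ) (f g : Fin m → Fin d) :
    symProj d m f g =
      ((if ∀ c, cnt g c = cnt f c then ∏ c, (cnt f c).factorial else 0 : ℕ) : ℂ) /
        (m.factorial : ℂ) := by
  rw [symProj, Matrix.smul_apply, Matrix.sum_apply]
  have h1 : ∀ π : Equiv.Perm (Fin m), permMat d m π f g = if f ∘ ⇑π = g then (1:ℂ) else 0 := by
    intro π; rw [permMat]; exact if_congr eq_comm rfl rfl
  rw [Finset.sum_congr rfl fun π _ => h1 π, Finset.sum_boole]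
  rw [show (Finset.univ.filter fun π : Equiv.Perm (Fin m) => f ∘ ⇑π = g).card
      = Fintype.card {π : Equiv.Perm (Fin m) // f ∘ ⇑π = g} from (Fintype.card_subtype _).symm]
  rw [card_perm_comp f g, smul_eq_mul, inv_mul_eq_div]

private lemma ptraceLast_symProj (hd : 1 ≤ d) (hkn : k ≤ n) :
    ptraceLast hkn (symProj d n) = (((dsym d n : ℂ)) / (dsym d k : ℂ)) • symProj d k := by
  have hdn : ((dsym d n : ℂ)) ≠ 0 := Nat.cast_ne_zero.mpr (dsym_pos hd n).ne'
  have hdk : ((dsym d k : ℂ)) ≠ 0 := Nat.cast_ne_zero.mpr (dsym_pos hd k).ne'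
  have hnf : ((n.factorial : ℂ)) ≠ 0 := Nat.cast_ne_zero.mpr n.factorial_ne_zero
  have hkf : ((k.factorial : ℂ)) ≠ 0 := Nat.cast_ne_zero.mpr k.factorial_ne_zero
  ext a b
  rw [ptraceLast_apply, Matrix.smul_apply, symProj_apply (d := d) k a b]
  have hterm : ∀ z : Fin (n - k) → Fin d, symProj d n (extf hkn a z) (extf hkn b z)
      = ((if ∀ c, cnt b c = cnt a c then ∏ c, (cnt a c + cnt z c).factorial else 0 : ℕ) : ℂ)
        / (n.factorial : ℂ) := by
    intro z
    rw [symProj_apply (d := d) n (extf hkn a z) (extf hkn b z)]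
    simp only [cnt_extf, Nat.add_right_cancel_iff]
  rw [Finset.sum_congr rfl fun z _ => hterm z]
  by_cases hab : ∀ c, cnt b c = cnt a c
  · simp only [if_pos hab]
    rw [← Finset.sum_div, ← Nat.cast_sum]
    have hkey := key_count hd (n - k) (fun c => cnt a c)
    rw [cnt_sum a, show k + (n - k) = n by omega] at hkey
    have hkey2 : (∑ z : Fin (n - k) → Fin d, ∏ c, (cnt a c + cnt z c).factorial)
        * (dsym d k * k.factorial) = (dsym d n * n.factorial) * ∏ c, (cnt a c).factorial := by
      rw [← af_eq hd, ← af_eq hd]; exact hkey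
    have hc : ((∑ z : Fin (n - k) → Fin d, ∏ c, (cnt a c + cnt z c).factorial : ℕ) : ℂ)
        * ((dsym d k : ℂ) * (k.factorial : ℂ))
        = ((dsym d n : ℂ) * (n.factorial : ℂ)) * ((∏ c, (cnt a c).factorial : ℕ) : ℂ) := by
      exact_mod_cast congrArg (fun t : ℕ => (t : ℂ)) hkey2
    push_cast at hc ⊢
    rw [smul_eq_mul]
    field_simp
    linear_combination hc
  · simp only [if_neg hab]
    simp

end PTraceAux
section EntropyAux

open Finset Matrix

private lemma hermFun_aux {ι : Type*} [Fintype ι] [DecidableEq ι] (f : ℝ → ℂ) (hf0 : f 0 = 0)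
    (A : Matrix ι ι ℂ) (hA : A.IsHermitian) (c : ℝ) (hc : c ≠ 0)
    (h2 : A * A = ((c : ℝ) : ℂ) • A) :
    hermFun f A = (f c / ((c : ℝ) : ℂ)) • A := by
  set U := (hA.eigenvectorUnitary : Matrix ι ι ℂ) with hU
  have hU1 : star U * U = 1 := by
    have := hA.eigenvectorUnitary.2
    rw [Matrix.mem_unitaryGroup_iff'] at this
    exact this
  have hU2 : U * star U = 1 := by
    have := hA.eigenvectorUnitary.2
    rw [Matrix.mem_unitaryGroup_iff] at this
    exact this
  set D := Matrix.diagonal ((RCLike.ofReal ∘ hA.eigenvalues : ι → ℂ)) with hD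
  have hs : A = U * D * star U := hA.spectral_theorem
  have hDA : star U * A * U = D := by
    rw [hs]
    simp only [← Matrix.mul_assoc]
    rw [hU1, Matrix.one_mul, Matrix.mul_assoc, hU1, Matrix.mul_one]
  have hD2 : D * D = ((c : ℝ) : ℂ) • D := by
    have e1 : star U * (A * A) * U = star U * (((c : ℝ) : ℂ) • A) * U := by rw [h2]
    have e2 : star U * (A * A) * U = D * D := by
      rw [show A * A = A * (U * star U) * A from by rw [hU2, Matrix.mul_one]]
      calc star U * (A * (U * star U) * A) * U
          = (star U * A * U) * (star U * A * U) := by simp only [Matrix.mul_assoc]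
        _ = D * D := by rw [hDA]
    have e3 : star U * (((c : ℝ) : ℂ) • A) * U = ((c : ℝ) : ℂ) • D := by
      rw [Matrix.mul_smul, Matrix.smul_mul, hDA]
    rw [← e2, e1, e3]
  have hev : ∀ i, hA.eigenvalues i = 0 ∨ hA.eigenvalues i = c := by
    intro i
    have h3 := congrFun (congrFun hD2 i) i
    rw [hD] at h3
    rw [Matrix.diagonal_mul_diagonal] at h3
    simp only [Matrix.smul_apply, Matrix.diagonal_apply_eq, Function.comp_apply,
      smul_eq_mul] at h3
    have h4 : ((hA.eigenvalues i * hA.eigenvalues i : ℝ) : ℂ) = ((c * hA.eigenvalues i : ℝ) : ℂ) := by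
      push_cast
      exact h3
    have h5 : hA.eigenvalues i * hA.eigenvalues i = c * hA.eigenvalues i :=
      Complex.ofReal_inj.mp h4
    have h6 : hA.eigenvalues i * (hA.eigenvalues i - c) = 0 := by
      rw [mul_sub, h5]; ring
    rcases mul_eq_zero.mp h6 with h7 | h7
    · exact Or.inl h7
    · exact Or.inr (by linarith [sub_eq_zero.mp h7])
  rw [hermFun, dif_pos hA]
  have hdiag : Matrix.diagonal (fun i => f (hA.eigenvalues i))
      = (f c / ((c : ℝ) : ℂ)) • D := by
    rw [hD, ← Matrix.diagonal_smul]
    ext i j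
    by_cases hij : i = j
    · subst hij
      simp only [Matrix.diagonal_apply_eq, Pi.smul_apply, Function.comp_apply, smul_eq_mul]
      rcases hev i with h | h
      · rw [h, hf0]; simp
      · rw [h]
        have hcc : (RCLike.ofReal c : ℂ) = ((c : ℝ) : ℂ) := rfl
        rw [hcc, div_mul_cancel₀ _ (Complex.ofReal_ne_zero.mpr hc)]
    · rw [Matrix.diagonal_apply_ne _ hij, Matrix.diagonal_apply_ne _ hij]
  rw [hdiag]
  rw [Matrix.mul_smul, Matrix.smul_mul, ← hs]

private lemma matLog_idem {ι : Type*} [Fintype ι] [DecidableEq ι]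
    (A : Matrix ι ι ℂ) (hA : A.IsHermitian) (h2 : A * A = A) : matLog A = 0 := by
  have h := hermFun_aux (fun x => ((Real.log x : ℝ) : ℂ)) (by simp) A hA 1 one_ne_zero
    (by rw [h2]; simp)
  rw [matLog, h]
  simp [Real.log_one]

private lemma matLog_smul_proj {ι : Type*} [Fintype ι] [DecidableEq ι]
    (P : Matrix ι ι ℂ) (hP : P.IsHermitian) (hP2 : P * P = P) (t : ℝ) (ht : 0 < t) :
    matLog (((t : ℝ) : ℂ) • P) = ((Real.log t : ℝ) : ℂ) • P := by
  have hherm : (((t : ℝ) : ℂ) • P).IsHermitian := by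
    show (((t : ℝ) : ℂ) • P)ᴴ = _
    rw [Matrix.conjTranspose_smul, hP]
    congr 1
    simp [Complex.star_def, Complex.conj_ofReal]
  have h2 : (((t : ℝ) : ℂ) • P) * (((t : ℝ) : ℂ) • P) = ((t : ℝ) : ℂ) • (((t : ℝ) : ℂ) • P) := by
    rw [Matrix.smul_mul, Matrix.mul_smul, hP2, smul_smul]
  have h := hermFun_aux (fun x => ((Real.log x : ℝ) : ℂ)) (by simp) _ hherm t ht.ne' h2
  rw [matLog, h, smul_smul]
  congr 1
  rw [div_mul_cancel₀]
  exact Complex.ofReal_ne_zero.mpr ht.ne'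

private lemma relEnt_pure {ι : Type*} [Fintype ι] [DecidableEq ι] (ρ P : Matrix ι ι ℂ)
    (hρh : ρ.IsHermitian) (hρ2 : ρ * ρ = ρ) (hρtr : ρ.trace = 1)
    (hPh : P.IsHermitian) (hP2 : P * P = P) (hρP : ρ * P = ρ)
    (t : ℝ) (ht : 0 < t) :
    relEnt ρ (((t : ℝ) : ℂ) • P) = - Real.log t := by
  rw [relEnt, matLog_idem ρ hρh hρ2, matLog_smul_proj P hPh hP2 t ht]
  rw [zero_sub, Matrix.mul_neg, Matrix.mul_smul, hρP]
  rw [Matrix.trace_neg, Matrix.trace_smul, hρtr, smul_eq_mul, mul_one]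
  simp

end EntropyAux

section MainAux

open Finset Matrix

variable {d k n : ℕ}

private lemma relEnt_tpow_piSym (hd : 1 ≤ d) (m : ℕ) (u : Fin d → ℂ)
    (hu : ∑ a, Complex.normSq (u a) = 1) :
    relEnt (tpow (outer u) m) (piSym d m) = Real.log (dsym d m) := by
  have hpos : (0 : ℝ) < (dsym d m : ℝ) := by exact_mod_cast dsym_pos hd m
  have hcast : piSym d m = ((((dsym d m : ℝ)⁻¹ : ℝ)) : ℂ) • symProj d m := by
    rw [piSym]
    congr 1
    push_cast
    ring
  rw [hcast, relEnt_pure (tpow (outer u) m) (symProj d m) (tpow_herm u) (tpow_idem u hu)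
    (tpow_trace u hu) symProj_herm symProj_idem (tpow_mul_symProj u)
    ((dsym d m : ℝ))⁻¹ (by positivity)]
  rw [Real.log_inv, neg_neg]

private lemma symPTrace_tpow (hkn : k ≤ n) (u : Fin d → ℂ)
    (hu : ∑ a, Complex.normSq (u a) = 1) :
    symPTrace d hkn (tpow (outer u) n) = tpow (outer u) k := by
  rw [symPTrace, symProj_mul_tpow u, tpow_mul_symProj u, ptraceLast_tpow hkn u hu,
    symProj_mul_tpow u, tpow_mul_symProj u]

private lemma symPTrace_piSym (hd : 1 ≤ d) (hkn : k ≤ n) :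
    symPTrace d hkn (piSym d n) = piSym d k := by
  have hdn : ((dsym d n : ℂ)) ≠ 0 := Nat.cast_ne_zero.mpr (dsym_pos hd n).ne'
  have hdk : ((dsym d k : ℂ)) ≠ 0 := Nat.cast_ne_zero.mpr (dsym_pos hd k).ne'
  rw [symPTrace, piSym]
  have h1 : symProj d n * (((dsym d n : ℂ))⁻¹ • symProj d n) * symProj d n
      = ((dsym d n : ℂ))⁻¹ • symProj d n := by
    rw [Matrix.mul_smul, Matrix.smul_mul, symProj_idem, symProj_idem]
  rw [h1, ptraceLast_smul, ptraceLast_symProj hd hkn]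
  rw [Matrix.mul_smul, Matrix.mul_smul, Matrix.smul_mul, Matrix.smul_mul,
    symProj_idem, symProj_idem, smul_smul, piSym]
  congr 1
  field_simp

end MainAux
/-- For a pure input state `φ`, the decrease of relative entropy to the symmetric maximally
mixed state under the symmetrized partial trace equals `−log(d[k]/d[n]) = log(d[n]/d[k])`. -/
theorem relEnt_decrease_pure_state
    (d k n : ℕ) (hd : 1 ≤ d) (hk : 1 ≤ k) (hkn : k ≤ n)
    (u : Fin d → ℂ) (hu : ∑ a, Complex.normSq (u a) = 1) :
    relEnt (tpow (outer u) n) (piSym d n) -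
        relEnt (symPTrace d hkn (tpow (outer u) n)) (symPTrace d hkn (piSym d n)) =
      -Real.log ((dsym d k : ℝ) / (dsym d n : ℝ)) ∧
    -Real.log ((dsym d k : ℝ) / (dsym d n : ℝ)) =
      Real.log ((dsym d n : ℝ) / (dsym d k : ℝ)) := by
  have hdn : (0:ℝ) < (dsym d n : ℝ) := by exact_mod_cast dsym_pos hd n
  have hdk : (0:ℝ) < (dsym d k : ℝ) := by exact_mod_cast dsym_pos hd k
  constructor
  · rw [symPTrace_tpow hkn u hu, symPTrace_piSym hd hkn,
      relEnt_tpow_piSym hd n u hu, relEnt_tpow_piSym hd k u hu,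
      Real.log_div hdk.ne' hdn.ne']
    ring
  · rw [← Real.log_inv, inv_div]
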